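/- arXiv:2105.00601 — 3 statements merged into one kernel-verified Lean document; each statement's English description precedes it below -/
import Mathlib

section
/- Let u : {-(r-1),…,2N} → ℝ (a discrete function on grid indices) and suppose u attains a strict maximum over all indices at some interior nonlocal-region index j* ∈ {1,…,N}, meaning u(j*) > u(j) for all j ≠ j*. Then the discrete nonlocal operator value L u(j*) := ∑_{k=1}^{r} [u(j*+k) − 2u(j*) + u(j*−k)]/(kΔx)² · ∫_{(k-1)Δx}^{kΔx} s² γ_δ(s) ds is strictly negative, provided γ_δ is nonnegative and ∫_0^δ s² γ_δ(s) ds > 0 with δ = rΔx and all indices j*±k lie in the grid. -/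
open MeasureTheory

theorem stmt_3 (r N : ℕ) (Δx : ℝ) (γ : ℝ → ℝ) (u : ℤ → ℝ) (jstar : ℤ)
    (hr : 0 < r) (hrN : r ≤ N) (hΔx : 0 < Δx)
    (hγ : ∀ s, 0 ≤ γ s)
    (hj1 : 1 ≤ jstar) (hjN : jstar ≤ (N:ℤ))
    (hmax : ∀ j : ℤ, -((r:ℤ) - 1) ≤ j → j ≤ 2 * (N:ℤ) → j ≠ jstar → u j < u jstar)
    (hpos : ∃ k ∈ Finset.Icc 1 r,
      0 < ∫ s in (((k:ℝ) - 1) * Δx)..((k:ℝ) * Δx), s ^ 2 * γ s) :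
    ∑ k ∈ Finset.Icc 1 r,
        (u (jstar + (k:ℤ)) - 2 * u jstar + u (jstar - (k:ℤ))) / ((k:ℝ) * Δx) ^ 2 *
          ∫ s in (((k:ℝ) - 1) * Δx)..((k:ℝ) * Δx), s ^ 2 * γ s < 0 := by
  have hnum : ∀ k ∈ Finset.Icc 1 r,
      (u (jstar + (k:ℤ)) - 2 * u jstar + u (jstar - (k:ℤ))) / ((k:ℝ) * Δx) ^ 2 < 0 := by
    intro k hk
    rw [Finset.mem_Icc] at hk
    obtain ⟨hk1, hkr⟩ := hk
    have hk1' : (1:ℤ) ≤ (k:ℤ) := by exact_mod_cast hk1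
    have hkr' : (k:ℤ) ≤ (r:ℤ) := by exact_mod_cast hkr
    have hrN' : (r:ℤ) ≤ (N:ℤ) := by exact_mod_cast hrN
    have h1 : u (jstar + (k:ℤ)) < u jstar := by apply hmax <;> omega
    have h2 : u (jstar - (k:ℤ)) < u jstar := by apply hmax <;> omega
    have hden : (0:ℝ) < ((k:ℝ) * Δx) ^ 2 := by
      have : (0:ℝ) < (k:ℝ) := by exact_mod_cast hk1
      positivity
    exact div_neg_of_neg_of_pos (by linarith) hden
  have hint : ∀ k ∈ Finset.Icc 1 r,
      0 ≤ ∫ s in (((k:ℝ) - 1) * Δx)..((k:ℝ) * Δx), s ^ 2 * γ s := by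
    intro k hk
    apply intervalIntegral.integral_nonneg
    · nlinarith [hΔx]
    · intro s _
      have := hγ s
      positivity
  obtain ⟨k0, hk0, hk0pos⟩ := hpos
  have hlt : ∑ k ∈ Finset.Icc 1 r,
      (u (jstar + (k:ℤ)) - 2 * u jstar + u (jstar - (k:ℤ))) / ((k:ℝ) * Δx) ^ 2 *
        ∫ s in (((k:ℝ) - 1) * Δx)..((k:ℝ) * Δx), s ^ 2 * γ s
      < ∑ k ∈ Finset.Icc 1 r, (0:ℝ) := by
    apply Finset.sum_lt_sum
    · intro k hk
      exact mul_nonpos_of_nonpos_of_nonneg (le_of_lt (hnum k hk)) (hint k hk)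
    · exact ⟨k0, hk0, mul_neg_of_neg_of_pos (hnum k0 hk0) hk0pos⟩
  simpa using hlt
end

section
/- The transitional-region quantity AA := (Δt/Δx²)[∑_{k=m+1}^{r} (1/(k-1)²) ∫_{(k-1)Δx}^{kΔx} s²γ_δ(s)ds + 2(∫_0^{x_i} s²γ_δ(s)ds + x_i ∫_{x_i}^{δ} sγ_δ(s)ds) + Δx ∫_{x_i}^{δ} sγ_δ(s)ds] satisfies AA ≤ 4(Δt/Δx²), for x_i = mΔx with 1 ≤ m ≤ r, δ = rΔx, and γ_δ nonnegative with ∫_0^δ s²γ_δ(s)ds = 1. In particular, AA ≤ 1 whenever Δt/Δx² ≤ 1/4. -/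
open MeasureTheory

private lemma mono_aux (f : ℝ → ℝ) (T a b : ℝ)
    (hT : IntervalIntegrable f volume 0 T)
    (ha0 : 0 ≤ a) (hb0 : 0 ≤ b) (haT : a ≤ T) (hbT : b ≤ T) :
    IntervalIntegrable f volume a b := by
  have h0T : (0:ℝ) ≤ T := le_trans ha0 haT
  apply hT.mono_set
  rw [Set.uIcc_of_le h0T]
  exact Set.uIcc_subset_Icc ⟨ha0, haT⟩ ⟨hb0, hbT⟩

private lemma sum_adjacent_aux (f : ℝ → ℝ) (Δx : ℝ) (hΔx : 0 < Δx) (m : ℕ) :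
    ∀ r : ℕ, m ≤ r → IntervalIntegrable f volume 0 ((r:ℝ) * Δx) →
    (∑ k ∈ Finset.Icc (m + 1) r,
        ∫ s in (((k:ℝ) - 1) * Δx)..((k:ℝ) * Δx), f s)
      = ∫ s in ((m:ℝ) * Δx)..((r:ℝ) * Δx), f s := by
  intro r
  induction r with
  | zero =>
    intro hm _
    interval_cases m
    simp
  | succ n ih =>
    intro hm hint
    push_cast at hint
    rcases Nat.lt_or_ge n m with h | h
    · have hmn : m = n + 1 := le_antisymm hm h
      subst hmn
      rw [Finset.Icc_eq_empty (by omega)]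
      simp
    · have hmn : (m:ℝ) ≤ (n:ℝ) := by exact_mod_cast h
      have hm0 : (0:ℝ) ≤ (m:ℝ) := Nat.cast_nonneg m
      have hΔ : 0 ≤ Δx := hΔx.le
      have h1 : (0:ℝ) ≤ (n:ℝ) * Δx := by positivity
      have h2 : (n:ℝ) * Δx ≤ ((n:ℝ) + 1) * Δx := by nlinarith
      have h3 : (0:ℝ) ≤ (m:ℝ) * Δx := by positivity
      have h4 : (m:ℝ) * Δx ≤ (n:ℝ) * Δx := by nlinarith
      have hintn : IntervalIntegrable f volume 0 ((n:ℝ) * Δx) :=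
        mono_aux f (((n:ℝ) + 1) * Δx) 0 ((n:ℝ) * Δx) hint le_rfl h1 (le_trans h1 h2) h2
      have hIH := ih h hintn
      rw [Finset.sum_Icc_succ_top (by omega : m + 1 ≤ n + 1), hIH]
      have e1 : ((n + 1 : ℕ) : ℝ) - 1 = (n:ℝ) := by push_cast; ring
      have e2 : ((n + 1 : ℕ) : ℝ) = (n:ℝ) + 1 := by push_cast; ring
      rw [e1, e2]
      exact intervalIntegral.integral_add_adjacent_intervals
        (mono_aux f _ _ _ hint h3 h1 (le_trans h4 h2) h2)
        (mono_aux f _ _ _ hint h1 (le_trans h1 h2) h2 le_rfl)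

theorem stmt_7 (γ : ℝ → ℝ) (Δx Δt : ℝ) (r m : ℕ)
    (hΔx : 0 < Δx) (hΔt : 0 < Δt) (hm1 : 1 ≤ m) (hmr : m ≤ r)
    (hγ : ∀ s, 0 ≤ γ s)
    (hint1 : IntervalIntegrable (fun s => s ^ 2 * γ s) volume 0 ((r:ℝ) * Δx))
    (hint2 : IntervalIntegrable (fun s => s * γ s) volume 0 ((r:ℝ) * Δx))
    (hnorm : (∫ s in (0:ℝ)..((r:ℝ) * Δx), s ^ 2 * γ s) = 1) :
    let xi := (m:ℝ) * Δx
    let δ := (r:ℝ) * Δx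
    let AA := Δt / Δx ^ 2 *
      ((∑ k ∈ Finset.Icc (m + 1) r,
          (1 / ((k:ℝ) - 1) ^ 2) * ∫ s in (((k:ℝ) - 1) * Δx)..((k:ℝ) * Δx), s ^ 2 * γ s)
        + 2 * ((∫ s in (0:ℝ)..xi, s ^ 2 * γ s) + xi * ∫ s in xi..δ, s * γ s)
        + Δx * ∫ s in xi..δ, s * γ s)
    AA ≤ 4 * (Δt / Δx ^ 2) ∧ (Δt / Δx ^ 2 ≤ 1 / 4 → AA ≤ 1) := by
  intro xi δ AA
  have hm : (1:ℝ) ≤ (m:ℝ) := by exact_mod_cast hm1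
  have hmr' : (m:ℝ) ≤ (r:ℝ) := by exact_mod_cast hmr
  have hxi0 : 0 ≤ xi := by simp only [xi]; positivity
  have hxiδ : xi ≤ δ := by simp only [xi, δ]; nlinarith
  have hδ0 : 0 ≤ δ := le_trans hxi0 hxiδ
  have hΔxi : Δx ≤ xi := by simp only [xi]; nlinarith
  have hf0 : ∀ s : ℝ, 0 ≤ s ^ 2 * γ s := fun s => mul_nonneg (sq_nonneg s) (hγ s)
  -- interval integrability on subintervals
  have hI1 : IntervalIntegrable (fun s => s ^ 2 * γ s) volume 0 xi :=
    mono_aux _ δ _ _ hint1 le_rfl hxi0 hδ0 hxiδ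
  have hI2 : IntervalIntegrable (fun s => s ^ 2 * γ s) volume xi δ :=
    mono_aux _ δ _ _ hint1 hxi0 hδ0 hxiδ le_rfl
  have hJ2 : IntervalIntegrable (fun s => s * γ s) volume xi δ :=
    mono_aux _ δ _ _ hint2 hxi0 hδ0 hxiδ le_rfl
  -- nonnegativity of the integrals
  have hposI : ∀ a b : ℝ, 0 ≤ a → a ≤ b → b ≤ δ →
      0 ≤ ∫ s in a..b, s ^ 2 * γ s := by
    intro a b ha hab hbδ
    apply intervalIntegral.integral_nonneg hab
    intro u _; exact hf0 u
  have hposJ : 0 ≤ ∫ s in xi..δ, s * γ s := by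
    apply intervalIntegral.integral_nonneg hxiδ
    intro u hu
    exact mul_nonneg (le_trans hxi0 hu.1) (hγ u)
  -- each subintegral is ≤ 1
  have hle1 : ∀ a b : ℝ, 0 ≤ a → a ≤ b → b ≤ δ →
      (∫ s in a..b, s ^ 2 * γ s) ≤ 1 := by
    intro a b ha hab hbδ
    rw [← hnorm]
    exact intervalIntegral.integral_mono_interval ha hab hbδ
      (Filter.Eventually.of_forall fun u => hf0 u) hint1
  -- Term 1 : the sum is ≤ 1
  have hsum : (∑ k ∈ Finset.Icc (m + 1) r,
      (1 / ((k:ℝ) - 1) ^ 2) * ∫ s in (((k:ℝ) - 1) * Δx)..((k:ℝ) * Δx), s ^ 2 * γ s)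
      ≤ 1 := by
    have hstep : ∀ k ∈ Finset.Icc (m + 1) r,
        (1 / ((k:ℝ) - 1) ^ 2) * (∫ s in (((k:ℝ) - 1) * Δx)..((k:ℝ) * Δx), s ^ 2 * γ s)
        ≤ ∫ s in (((k:ℝ) - 1) * Δx)..((k:ℝ) * Δx), s ^ 2 * γ s := by
      intro k hk
      rw [Finset.mem_Icc] at hk
      have hk2 : (2:ℝ) ≤ (k:ℝ) := by
        have : 2 ≤ k := by omega
        exact_mod_cast this
      have hk1 : (1:ℝ) ≤ ((k:ℝ) - 1) ^ 2 := by nlinarith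
      have hIk : 0 ≤ ∫ s in (((k:ℝ) - 1) * Δx)..((k:ℝ) * Δx), s ^ 2 * γ s := by
        apply hposI <;> [skip; nlinarith; skip]
        · nlinarith
        · have : (k:ℝ) ≤ (r:ℝ) := by exact_mod_cast hk.2
          simp only [δ]; nlinarith
      calc (1 / ((k:ℝ) - 1) ^ 2) * (∫ s in (((k:ℝ) - 1) * Δx)..((k:ℝ) * Δx), s ^ 2 * γ s)
          ≤ 1 * (∫ s in (((k:ℝ) - 1) * Δx)..((k:ℝ) * Δx), s ^ 2 * γ s) := by
            apply mul_le_mul_of_nonneg_right _ hIk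
            rw [div_le_one (by positivity)]
            exact hk1
        _ = _ := one_mul _
    calc (∑ k ∈ Finset.Icc (m + 1) r,
          (1 / ((k:ℝ) - 1) ^ 2) * ∫ s in (((k:ℝ) - 1) * Δx)..((k:ℝ) * Δx), s ^ 2 * γ s)
        ≤ ∑ k ∈ Finset.Icc (m + 1) r,
            ∫ s in (((k:ℝ) - 1) * Δx)..((k:ℝ) * Δx), s ^ 2 * γ s :=
          Finset.sum_le_sum hstep
      _ = ∫ s in xi..δ, s ^ 2 * γ s :=
          sum_adjacent_aux (fun s => s ^ 2 * γ s) Δx hΔx m r hmr hint1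
      _ ≤ 1 := hle1 xi δ hxi0 hxiδ le_rfl
  -- Term 2 : middle bracket ≤ 1
  have hmid : (∫ s in (0:ℝ)..xi, s ^ 2 * γ s) + xi * (∫ s in xi..δ, s * γ s) ≤ 1 := by
    have hxiJ : xi * (∫ s in xi..δ, s * γ s) ≤ ∫ s in xi..δ, s ^ 2 * γ s := by
      rw [← intervalIntegral.integral_const_mul]
      apply intervalIntegral.integral_mono_on hxiδ (hJ2.const_mul xi) hI2
      intro u hu
      have hu1 : xi ≤ u := hu.1
      have hu0 : 0 ≤ u := le_trans hxi0 hu1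
      nlinarith [mul_nonneg (mul_nonneg (sub_nonneg.2 hu1) hu0) (hγ u)]
    have hsplit : (∫ s in (0:ℝ)..xi, s ^ 2 * γ s) + (∫ s in xi..δ, s ^ 2 * γ s) = 1 := by
      rw [← hnorm]
      exact intervalIntegral.integral_add_adjacent_intervals hI1 hI2
    linarith
  -- Term 3 : Δx * ∫ ≤ 1
  have htail : Δx * (∫ s in xi..δ, s * γ s) ≤ 1 := by
    have h1 : Δx * (∫ s in xi..δ, s * γ s) ≤ xi * (∫ s in xi..δ, s * γ s) :=
      mul_le_mul_of_nonneg_right hΔxi hposJ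
    have hxiJ : xi * (∫ s in xi..δ, s * γ s) ≤ ∫ s in xi..δ, s ^ 2 * γ s := by
      rw [← intervalIntegral.integral_const_mul]
      apply intervalIntegral.integral_mono_on hxiδ (hJ2.const_mul xi) hI2
      intro u hu
      have hu1 : xi ≤ u := hu.1
      have hu0 : 0 ≤ u := le_trans hxi0 hu1
      nlinarith [mul_nonneg (mul_nonneg (sub_nonneg.2 hu1) hu0) (hγ u)]
    have := hle1 xi δ hxi0 hxiδ le_rfl
    linarith
  -- combine
  have hcoef : 0 < Δt / Δx ^ 2 := by positivity
  have hbody : (∑ k ∈ Finset.Icc (m + 1) r,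
      (1 / ((k:ℝ) - 1) ^ 2) * ∫ s in (((k:ℝ) - 1) * Δx)..((k:ℝ) * Δx), s ^ 2 * γ s)
      + 2 * ((∫ s in (0:ℝ)..xi, s ^ 2 * γ s) + xi * ∫ s in xi..δ, s * γ s)
      + Δx * ∫ s in xi..δ, s * γ s ≤ 4 := by linarith
  have hAA : AA ≤ Δt / Δx ^ 2 * 4 := mul_le_mul_of_nonneg_left hbody hcoef.le
  constructor
  · linarith
  · intro hsmall
    nlinarith
end

section
/- Global error estimate from consistency plus discrete maximum principle: suppose the error e_i^n satisfies e_i^{n+1} = e_i^n + Δt(L e^n(i) + ε_i^n) with |ε_i^n| ≤ C(Δx² + Δt), e_i^0 = 0, e_i^n = 0 on boundary indices, and L satisfies the discrete maximum principle under the CFL condition Δt/Δx² ≤ 1/4. Then |e_i^n| ≤ (nΔt)·C(Δx² + Δt) for all interior i and 0 ≤ n ≤ N_T. -/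
open Classical in
/-- Clamped explicit-Euler evolution used as a test function for the DMP:
evolve freely on `Iin \ IB`, clamp to `M` on `IB`, set to `M` outside `Iin`. -/
noncomputable def Wfun (L : (ℤ → ℝ) → ℤ → ℝ) (Iin IB : Set ℤ) (Δt M : ℝ) (w : ℤ → ℝ) :
    ℕ → ℤ → ℝ
  | 0 => w
  | n+1 => fun i =>
      if i ∈ Iin then
        if i ∈ IB then
          min M (Wfun L Iin IB Δt M w n i + Δt * L (Wfun L Iin IB Δt M w n) i)
        else Wfun L Iin IB Δt M w n i + Δt * L (Wfun L Iin IB Δt M w n) i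
      else M

theorem stmt_12 (L : (ℤ → ℝ) → ℤ → ℝ) (Iin IB : Set ℤ)
    (Δx Δt C : ℝ) (NT : ℕ) (e ε : ℕ → ℤ → ℝ)
    (hΔx : 0 < Δx) (hΔt : 0 < Δt) (hC : 0 ≤ C)
    (hlin : IsLinearMap ℝ L)
    (hCFL : Δt / Δx ^ 2 ≤ 1 / 4)
    (hDMP : ∀ (v f : ℕ → ℤ → ℝ) (M : ℝ),
      (∀ n < NT, ∀ i ∈ Iin, v (n + 1) i = v n i + Δt * (L (v n) i + f n i)) →
      (∀ n < NT, ∀ i ∈ Iin, f n i ≤ 0) →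
      (∀ i : ℤ, v 0 i ≤ M) →
      (∀ n ≤ NT, ∀ i ∈ IB, v n i ≤ M) →
      ∀ n ≤ NT, ∀ i ∈ Iin, v n i ≤ M)
    (hscheme : ∀ n < NT, ∀ i ∈ Iin, e (n + 1) i = e n i + Δt * (L (e n) i + ε n i))
    (hε : ∀ n < NT, ∀ i ∈ Iin, |ε n i| ≤ C * (Δx ^ 2 + Δt))
    (hinit : ∀ i : ℤ, e 0 i = 0)
    (hbdry : ∀ n ≤ NT, ∀ i ∈ IB, e n i = 0) :
    ∀ n ≤ NT, ∀ i ∈ Iin, |e n i| ≤ ((n:ℝ) * Δt) * (C * (Δx ^ 2 + Δt)) := by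
  have hΔt0 : Δt ≠ 0 := ne_of_gt hΔt
  set K := C * (Δx ^ 2 + Δt) with hKdef
  have hK0 : 0 ≤ K := mul_nonneg hC (by positivity)
  have hL0 : L (fun _ => (0:ℝ)) = fun _ => 0 := by
    have h := hlin.map_smul 0 (fun _ => (0:ℝ))
    exact (by simpa using h : L 0 = 0)
  -- basic facts about `Wfun`
  have Wstep : ∀ (M : ℝ) (w : ℤ → ℝ) (n : ℕ) (i : ℤ), i ∈ Iin →
      Wfun L Iin IB Δt M w (n+1) i ≤
        Wfun L Iin IB Δt M w n i + Δt * L (Wfun L Iin IB Δt M w n) i := by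
    intro M w n i hi
    simp only [Wfun]
    rw [if_pos hi]
    by_cases h : i ∈ IB
    · rw [if_pos h]; exact min_le_right _ _
    · rw [if_neg h]
  have WstepEq : ∀ (M : ℝ) (w : ℤ → ℝ) (n : ℕ) (i : ℤ), i ∈ Iin → i ∉ IB →
      Wfun L Iin IB Δt M w (n+1) i =
        Wfun L Iin IB Δt M w n i + Δt * L (Wfun L Iin IB Δt M w n) i := by
    intro M w n i hi hib
    simp only [Wfun]
    rw [if_pos hi, if_neg hib]
  have Wbdry : ∀ (M : ℝ) (w : ℤ → ℝ), (∀ i ∈ IB, w i ≤ M) →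
      ∀ (n : ℕ), ∀ i ∈ IB, Wfun L Iin IB Δt M w n i ≤ M := by
    intro M w hw n i hi
    cases n with
    | zero => exact hw i hi
    | succ n =>
      simp only [Wfun]
      by_cases h : i ∈ Iin
      · rw [if_pos h, if_pos hi]; exact min_le_left _ _
      · rw [if_neg h]
  -- the tautological forcing
  have schemeOf : ∀ (v : ℕ → ℤ → ℝ) (n : ℕ) (i : ℤ),
      v (n+1) i = v n i + Δt * (L (v n) i + ((v (n+1) i - v n i)/Δt - L (v n) i)) := by
    intro v n i
    field_simp
    ring
  have fle : ∀ a b c : ℝ, a ≤ b + Δt * c → (a - b)/Δt - c ≤ 0 := by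
    intro a b c h
    have h2 : (a - b)/Δt ≤ c := by
      rw [div_le_iff₀ hΔt]; nlinarith
    linarith
  -- Fact A : L(1) ≤ 0 on Iin \ IB
  have hA : 1 ≤ NT → ∀ i0 ∈ Iin, i0 ∉ IB → L (fun _ => (1:ℝ)) i0 ≤ 0 := by
    intro hNT i0 hi0 hib0
    set v : ℕ → ℤ → ℝ := Wfun L Iin IB Δt 1 (fun _ => 1) with hv
    have hcon := hDMP v (fun n i => (v (n+1) i - v n i)/Δt - L (v n) i) 1
      (fun n _ i _ => schemeOf v n i)
      (fun n _ i hi => fle _ _ _ (Wstep 1 (fun _ => 1) n i hi))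
      (fun i => le_refl 1)
      (fun n _ i hi => Wbdry 1 (fun _ => 1) (fun _ _ => le_refl 1) n i hi)
    have h2 := hcon 1 hNT i0 hi0
    have hstep : Wfun L Iin IB Δt 1 (fun _ => (1:ℝ)) 1 i0 =
        (1:ℝ) + Δt * L (fun _ => (1:ℝ)) i0 := WstepEq 1 (fun _ => 1) 0 i0 hi0 hib0
    have h4 : Wfun L Iin IB Δt 1 (fun _ => (1:ℝ)) 1 i0 ≤ 1 := h2
    rw [hstep] at h4
    nlinarith
  -- Fact B : one-step comparison oracle
  have hB : 2 ≤ NT → ∀ u : ℤ → ℝ, (∀ j ∈ Iin, u j ≤ 0) → (∀ j ∈ IB, u j ≤ 0) →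
      ∀ j ∈ Iin, j ∉ IB → u j + Δt * L u j ≤ 0 := by
    intro hNT u hu1 hu2 j hj hjb
    set W : ℕ → ℤ → ℝ := Wfun L Iin IB Δt 0 u with hW
    set v : ℕ → ℤ → ℝ := fun n => Nat.casesOn n (fun _ => (0:ℝ)) (fun m => W m) with hvdef
    have hv0 : v 0 = fun _ => (0:ℝ) := rfl
    have hvs : ∀ m : ℕ, v (m+1) = W m := fun m => rfl
    have hfle : ∀ n < NT, ∀ i ∈ Iin, (v (n+1) i - v n i)/Δt - L (v n) i ≤ 0 := by
      intro n _ i hi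
      cases n with
      | zero =>
        show (u i - (0:ℝ))/Δt - L (fun _ => (0:ℝ)) i ≤ 0
        rw [hL0]
        have h5 : u i / Δt ≤ 0 := by
          rw [div_nonpos_iff]
          exact Or.inr ⟨hu1 i hi, le_of_lt hΔt⟩
        simpa using h5
      | succ m =>
        show (Wfun L Iin IB Δt 0 u (m+1) i - Wfun L Iin IB Δt 0 u m i)/Δt -
          L (Wfun L Iin IB Δt 0 u m) i ≤ 0
        exact fle _ _ _ (Wstep 0 u m i hi)
    have hbd : ∀ n ≤ NT, ∀ i ∈ IB, v n i ≤ 0 := by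
      intro n _ i hi
      cases n with
      | zero => exact le_refl 0
      | succ m =>
        show Wfun L Iin IB Δt 0 u m i ≤ 0
        exact Wbdry 0 u hu2 m i hi
    have hcon := hDMP v (fun n i => (v (n+1) i - v n i)/Δt - L (v n) i) 0
      (fun n _ i _ => schemeOf v n i) hfle (fun i => le_refl 0) hbd
    have h2 := hcon 2 hNT j hj
    have hstep : Wfun L Iin IB Δt 0 u 1 j = u j + Δt * L u j :=
      WstepEq 0 u 0 j hj hjb
    have h4 : Wfun L Iin IB Δt 0 u 1 j ≤ 0 := h2
    rw [hstep] at h4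
    exact h4
  -- induction step
  have key : ∀ m : ℕ, m + 1 ≤ NT → (∀ j ∈ Iin, |e m j| ≤ ((m:ℝ) * Δt) * K) →
      ∀ j ∈ Iin, |e (m+1) j| ≤ (((m:ℝ)+1) * Δt) * K := by
    intro m hm IH j hj
    by_cases hjb : j ∈ IB
    · rw [hbdry (m+1) hm j hjb, abs_zero]
      positivity
    · rcases Nat.eq_zero_or_pos m with hm0 | hmpos
      · subst hm0
        have hs := hscheme 0 (by omega) j hj
        have he0 : e 0 = fun _ => 0 := funext hinit
        rw [he0, hL0] at hs
        simp only at hs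
        have hε0 := hε 0 (by omega) j hj
        rw [hs]
        have : |0 + Δt * (0 + ε 0 j)| = Δt * |ε 0 j| := by
          rw [zero_add, zero_add, abs_mul, abs_of_pos hΔt]
        rw [this]
        have h3 : Δt * |ε 0 j| ≤ Δt * K := by
          apply mul_le_mul_of_nonneg_left _ (le_of_lt hΔt)
          exact hε0
        norm_num
        linarith
      · have hNT2 : 2 ≤ NT := by omega
        have honej : L (fun _ => (1:ℝ)) j ≤ 0 := hA (by omega) j hj hjb
        have hmle : m ≤ NT := by omega
        set c : ℝ := ((m:ℝ) * Δt) * K with hc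
        have hc0 : 0 ≤ c := by positivity
        have orac : ∀ s : ℝ, |s| = 1 → s * (e m j + Δt * L (e m) j) ≤ c := by
          intro s hs
          set u : ℤ → ℝ := fun x => s * e m x - c with hu
          have hueq : u = s • e m + (-c) • (fun _ => (1:ℝ)) := by
            funext x
            simp [hu, smul_eq_mul]
            ring
          have hLu : L u j = s * L (e m) j + (-c) * L (fun _ => (1:ℝ)) j := by
            rw [hueq, hlin.map_add, hlin.map_smul, hlin.map_smul]
            simp [smul_eq_mul]
          have hu1 : ∀ x ∈ Iin, u x ≤ 0 := by
            intro x hx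
            have h1 := IH x hx
            have h2 : s * e m x ≤ c := by
              calc s * e m x ≤ |s * e m x| := le_abs_self _
                _ = |e m x| := by rw [abs_mul, hs, one_mul]
                _ ≤ c := h1
            simp [hu]
            linarith
          have hu2 : ∀ x ∈ IB, u x ≤ 0 := by
            intro x hx
            simp [hu, hbdry m hmle x hx]
            exact hc0
          have h := hB hNT2 u hu1 hu2 j hj hjb
          rw [hLu] at h
          have hterm : 0 ≤ Δt * (c * (-(L (fun _ => (1:ℝ)) j))) :=
            mul_nonneg (le_of_lt hΔt) (mul_nonneg hc0 (neg_nonneg.mpr honej))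
          have huj : u j = s * e m j - c := rfl
          rw [huj] at h
          nlinarith
        have hs := hscheme m (by omega) j hj
        have hε1 := abs_le.mp (hε m (by omega) j hj)
        have h1 := orac 1 (by norm_num)
        have h2 := orac (-1) (by norm_num)
        have hεK1 : Δt * ε m j ≤ Δt * K := mul_le_mul_of_nonneg_left hε1.2 (le_of_lt hΔt)
        have hεK2 : Δt * (-K) ≤ Δt * ε m j := mul_le_mul_of_nonneg_left hε1.1 (le_of_lt hΔt)
        rw [hs, abs_le]
        constructor
        · nlinarith
        · nlinarith
  -- conclude by induction
  intro n
  induction n with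
  | zero =>
    intro _ i hi
    simp [hinit i]
  | succ m ih =>
    intro hm i hi
    have IH : ∀ j ∈ Iin, |e m j| ≤ ((m:ℝ) * Δt) * K := fun j hj => ih (by omega) j hj
    have h := key m hm IH i hi
    push_cast
    exact h
end
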